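/- Let G be a tree and let S be a minimal perfect critical set of G with S ≠ V. Let B = {u ∈ V∖S : N_S(u) ≠ ∅ and N_S(u) ≠ S}. Then no two vertices of B are adjacent in G; that is, in the simplified graph G̃ = G[S ∪ B], the set B is a set of pairwise non-adjacent (isolated in G̃[B]) vertices. -/

import Mathlib

open Matrix
open scoped Classical

/-- `S` is a critical set of `G`: `S` is nonempty and there is a nonzero eigenvector of the
Laplacian of `G` vanishing outside `S`. -/
def IsCriticalSet {V : Type*} [Fintype V] [DecidableEq V] (G : SimpleGraph V) (S : Set V) :
    Prop :=
  S.Nonempty ∧ ∃ (lam : ℝ) (y : V → ℝ), y ≠ 0 ∧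
    G.lapMatrix ℝ *ᵥ y = lam • y ∧ ∀ v ∉ S, y v = 0

/-- `S` is a perfect critical set of `G`: some inducing eigenvector vanishes outside `S` and is
nonzero at every vertex of `S`. -/
def IsPerfectCriticalSet {V : Type*} [Fintype V] [DecidableEq V] (G : SimpleGraph V)
    (S : Set V) : Prop :=
  S.Nonempty ∧ ∃ (lam : ℝ) (y : V → ℝ), y ≠ 0 ∧
    G.lapMatrix ℝ *ᵥ y = lam • y ∧ (∀ v ∉ S, y v = 0) ∧ ∀ v ∈ S, y v ≠ 0

/-- `S` is a minimal perfect critical set of `G`: a perfect critical set none of whose proper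
subsets is a perfect critical set. -/
def IsMinimalPerfectCriticalSet {V : Type*} [Fintype V] [DecidableEq V] (G : SimpleGraph V)
    (S : Set V) : Prop :=
  IsPerfectCriticalSet G S ∧ ∀ T : Set V, T ⊂ S → ¬ IsPerfectCriticalSet G T

/-- Proposition: if `S` is a nontrivial minimal perfect critical set of a tree `G` and `B` is
the set of vertices outside `S` whose neighborhood in `S` is neither empty nor all of `S`
(the vertices of the simplified graph outside `S`), then no two vertices of `B` are adjacent. -/
theorem mpcs_of_tree_outside_vertices_pairwise_nonadjacent
    {V : Type*} [Fintype V] [DecidableEq V]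
    (G : SimpleGraph V) (hG : G.IsTree)
    (S : Set V) (hS : IsMinimalPerfectCriticalSet G S) (hSV : S ≠ Set.univ)
    (B : Set V)
    (hB : B = {u : V | u ∉ S ∧ (∃ w ∈ S, G.Adj u w) ∧ ¬ (∀ w ∈ S, G.Adj u w)}) :
    ∀ u ∈ B, ∀ w ∈ B, ¬ G.Adj u w := by
  subst hB
  rintro u ⟨huS, ⟨su, hsuS, hsu⟩, -⟩ w ⟨hwS, ⟨tw, htwS, htw⟩, -⟩ huw
  obtain ⟨⟨-, lam, y, hy0, heig, hyout, hyin⟩, hmin⟩ := hS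
  set G' : SimpleGraph V := G.deleteEdges {s(u, w)} with hG'def
  have hbridge : ¬ G'.Reachable u w :=
    ((SimpleGraph.isAcyclic_iff_forall_adj_isBridge.mp hG.IsAcyclic) huw)
  -- key adjacency fact
  have key : ∀ v x : V, G'.Reachable u v → ¬ G'.Reachable u x → G.Adj v x →
      v = u ∧ x = w := by
    intro v x hv hx hadj
    by_cases he : s(v, x) = s(u, w)
    · rw [Sym2.eq_iff] at he
      rcases he with ⟨rfl, rfl⟩ | ⟨rfl, rfl⟩
      · exact ⟨rfl, rfl⟩
      · exact absurd hv hbridge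
    · have hadj' : G'.Adj v x := by
        rw [hG'def, SimpleGraph.deleteEdges_adj]
        exact ⟨hadj, by simpa using he⟩
      exact absurd (hv.trans hadj'.reachable) hx
  have hsu' : G'.Reachable u su := by
    refine SimpleGraph.Adj.reachable ?_
    rw [hG'def, SimpleGraph.deleteEdges_adj]
    refine ⟨hsu, ?_⟩
    simp only [Set.mem_singleton_iff, Sym2.eq_iff]
    rintro (⟨-, h⟩ | ⟨-, h⟩)
    · exact hwS (h ▸ hsuS)
    · exact huS (h ▸ hsuS)
  have htw' : ¬ G'.Reachable u tw := by
    intro h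
    refine hbridge (h.trans (SimpleGraph.Adj.reachable ?_).symm)
    rw [hG'def, SimpleGraph.deleteEdges_adj]
    refine ⟨htw, ?_⟩
    simp only [Set.mem_singleton_iff, Sym2.eq_iff]
    rintro (⟨-, h⟩ | ⟨-, h⟩)
    · exact hwS (h ▸ htwS)
    · exact huS (h ▸ htwS)
  set T : Set V := S ∩ {v | G'.Reachable u v} with hT
  have hTsub : T ⊂ S := by
    constructor
    · exact Set.inter_subset_left
    · intro hsub
      exact htw' (hsub htwS).2
  refine hmin T hTsub ?_
  set z : V → ℝ := fun v => if G'.Reachable u v then y v else 0 with hz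
  have hzsu : z su = y su := if_pos hsu'
  refine ⟨⟨su, hsuS, hsu'⟩, lam, z, ?_, ?_, ?_, ?_⟩
  · intro h
    exact hyin su hsuS (by rw [← hzsu, h]; rfl)
  · funext v
    have hev : G.degree v * y v - ∑ x ∈ G.neighborFinset v, y x = lam * y v := by
      rw [← SimpleGraph.lapMatrix_mulVec_apply, heig]; rfl
    show (G.lapMatrix ℝ *ᵥ z) v = lam * z v
    rw [SimpleGraph.lapMatrix_mulVec_apply]
    by_cases hv : G'.Reachable u v
    · have hzv : z v = y v := if_pos hv
      have hsum : ∑ x ∈ G.neighborFinset v, z x = ∑ x ∈ G.neighborFinset v, y x := by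
        refine Finset.sum_congr rfl ?_
        intro x hx
        rw [SimpleGraph.mem_neighborFinset] at hx
        by_cases hxr : G'.Reachable u x
        · exact if_pos hxr
        · have h2 := (key v x hv hxr hx).2
          have hyx : y x = 0 := by rw [h2]; exact hyout w hwS
          show (if G'.Reachable u x then y x else 0) = y x
          rw [if_neg hxr, hyx]
      rw [hzv, hsum, hev]
    · have hzv : z v = 0 := if_neg hv
      have hsum : ∑ x ∈ G.neighborFinset v, z x = 0 := by
        refine Finset.sum_eq_zero ?_
        intro x hx
        rw [SimpleGraph.mem_neighborFinset] at hx
        by_cases hxr : G'.Reachable u x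
        · have h2 := (key x v hxr hv hx.symm).1
          show (if G'.Reachable u x then y x else 0) = 0
          rw [if_pos hxr, h2]
          exact hyout u huS
        · exact if_neg hxr
      rw [hzv, hsum, mul_zero, sub_zero, mul_zero]
  · intro v hv
    rw [hT, Set.mem_inter_iff] at hv
    push_neg at hv
    by_cases hvr : G'.Reachable u v
    · have hvS : v ∉ S := fun h => hv h hvr
      show (if G'.Reachable u v then y v else 0) = 0
      rw [if_pos hvr]
      exact hyout v hvS
    · exact if_neg hvr
  · rintro v ⟨hvS, hvr⟩
    have hvr' : G'.Reachable u v := hvr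
    show (if G'.Reachable u v then y v else 0) ≠ 0
    rw [if_pos hvr']
    exact hyin v hvS
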